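/- The number of decision nodes in the reduced multi-rooted BDD (in flip-evaluation variable order) for the BITWISE_INT encoding of a distribution over {0,...,2^b - 1} is exactly Σ_{i=1}^{b} (2^i - 1) = 2^{b+1} - b - 2. -/

import Mathlib

/-- The restriction (subfunction) of `f` obtained by fixing the variables
`x_0, …, x_{t-1}` to the values given by `v`. -/
def restrictF (f : (ℕ → Bool) → Bool) (t : ℕ) (v : ℕ → Bool) : (ℕ → Bool) → Bool :=
  fun x => f (fun j => if j < t then v j else x j)

/-- `g` essentially depends on the variable `x_t`. -/
def dependsOn (g : (ℕ → Bool) → Bool) (t : ℕ) : Prop :=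
  ∃ x : ℕ → Bool, g (Function.update x t true) ≠ g (Function.update x t false)

/-- The number of decision nodes of the reduced multi-rooted ordered BDD (with
variable order `x_0 < x_1 < ⋯ < x_{numVars - 1}`) for the family of root
functions `F`: by the canonicity of reduced OBDDs, the decision nodes labeled
`x_t` correspond exactly to the distinct subfunctions obtained from some root by
fixing the variables below `t` that essentially depend on `x_t` (shared across
all roots). -/
noncomputable def bddNodeCount (F : Set ((ℕ → Bool) → Bool)) (numVars : ℕ) : ℕ :=
  ∑ t ∈ Finset.range numVars,
    Set.ncard {g | (∃ f ∈ F, ∃ v, g = restrictF f t v) ∧ dependsOn g t}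

/-- The index of the decision variable `x_s` of the BITWISE_INT encoding in the
flip evaluation order (consistent with the prefix order on bit strings): strings
are ordered by length and then by their binary value. -/
def varIdx (s : List Bool) : ℕ :=
  2 ^ s.length - 1 + s.foldl (fun a bit => 2 * a + bit.toNat) 0

/-- The prefix of bits chosen by the BITWISE_INT process under the assignment
`x` to the decision variables: having chosen prefix `s`, the next bit is the
value of the variable `x_s`. -/
def chosenPrefix (x : ℕ → Bool) : ℕ → List Bool
  | 0 => []
  | n + 1 => chosenPrefix x n ++ [x (varIdx (chosenPrefix x n))]
section Aux

def valB (s : List Bool) : ℕ := s.foldl (fun a bit => 2 * a + bit.toNat) 0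

lemma varIdx_def (s : List Bool) : varIdx s = 2 ^ s.length - 1 + valB s := rfl

lemma valB_append (p : List Bool) (c : Bool) :
    valB (p ++ [c]) = 2 * valB p + c.toNat := by
  simp [valB, List.foldl_append]

lemma valB_lt (s : List Bool) : valB s < 2 ^ s.length := by
  induction s using List.reverseRecOn with
  | nil => simp [valB]
  | append_singleton p c ih =>
    rw [valB_append]
    have hc : c.toNat ≤ 1 := Bool.toNat_le c
    simp only [List.length_append, List.length_singleton, pow_succ]
    omega

lemma varIdx_succ (s : List Bool) : varIdx s + 1 = 2 ^ s.length + valB s := by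
  have h : 1 ≤ 2 ^ s.length := Nat.one_le_pow _ _ (by norm_num)
  rw [varIdx_def]; omega

lemma varIdx_lt_pow (s : List Bool) : varIdx s + 1 < 2 ^ (s.length + 1) := by
  have h1 := valB_lt s
  have h2 := varIdx_succ s
  rw [pow_succ]; omega

lemma varIdx_lt_of_length_lt {p s : List Bool} (h : p.length < s.length) :
    varIdx p < varIdx s := by
  have h1 := varIdx_lt_pow p
  have h2 : 2 ^ (p.length + 1) ≤ 2 ^ s.length := Nat.pow_le_pow_right (by norm_num) h
  have h3 := varIdx_succ s
  omega

def strOf : ℕ → ℕ → List Bool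
  | 0, _ => []
  | d + 1, r => strOf d (r / 2) ++ [decide (r % 2 = 1)]

lemma length_strOf (d r : ℕ) : (strOf d r).length = d := by
  induction d generalizing r with
  | zero => rfl
  | succ d ih => simp [strOf, ih]

lemma valB_strOf {d r : ℕ} (h : r < 2 ^ d) : valB (strOf d r) = r := by
  induction d generalizing r with
  | zero => interval_cases r; rfl
  | succ d ih =>
    have hlt : r / 2 < 2 ^ d := by
      rw [pow_succ] at h; omega
    rw [strOf, valB_append, ih hlt]
    rcases Nat.mod_two_eq_zero_or_one r with h2 | h2 <;> simp [h2] <;> omega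

lemma strOf_valB (s : List Bool) : strOf s.length (valB s) = s := by
  induction s using List.reverseRecOn with
  | nil => rfl
  | append_singleton p c ih =>
    rw [valB_append]
    simp only [List.length_append, List.length_singleton]
    rw [strOf]
    cases c <;> simp [Nat.mul_add_div, Nat.mul_add_mod] <;> exact ih

lemma varIdx_injective : Function.Injective varIdx := by
  intro p q h
  have hl : p.length = q.length := by
    rcases lt_trichotomy p.length q.length with hlt | he | hgt
    · exact absurd h (by have := varIdx_lt_of_length_lt hlt; omega)
    · exact he
    · exact absurd h (by have := varIdx_lt_of_length_lt hgt; omega)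
  have hv : valB p = valB q := by
    have h1 := varIdx_succ p; have h2 := varIdx_succ q
    rw [hl] at h1; omega
  calc p = strOf p.length (valB p) := (strOf_valB p).symm
    _ = strOf q.length (valB q) := by rw [hl, hv]
    _ = q := strOf_valB q

end Aux
section Aux2

def descend (s : List Bool) (x : ℕ → Bool) : ℕ → List Bool
  | 0 => s
  | n + 1 => descend s x n ++ [x (varIdx (descend s x n))]

lemma descend_length (s : List Bool) (x : ℕ → Bool) (n : ℕ) :
    (descend s x n).length = s.length + n := by
  induction n with
  | zero => rfl
  | succ n ih => simp [descend, ih]; omega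

lemma chosenPrefix_eq_descend (x : ℕ → Bool) (n : ℕ) :
    chosenPrefix x n = descend [] x n := by
  induction n with
  | zero => rfl
  | succ n ih => rw [chosenPrefix, descend, ih]

lemma chosenPrefix_length (x : ℕ → Bool) (n : ℕ) :
    (chosenPrefix x n).length = n := by
  rw [chosenPrefix_eq_descend, descend_length]; simp

lemma chosenPrefix_congr (x y : ℕ → Bool) (n : ℕ)
    (h : ∀ k < n, x (varIdx (chosenPrefix x k)) = y (varIdx (chosenPrefix x k))) :
    chosenPrefix x n = chosenPrefix y n := by
  induction n with
  | zero => rfl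
  | succ n ih =>
    have he := ih (fun k hk => h k (by omega))
    rw [chosenPrefix, chosenPrefix, ← he, h n (by omega)]

lemma descend_congr (s : List Bool) (x y : ℕ → Bool) (n : ℕ)
    (h : ∀ k < n, x (varIdx (descend s x k)) = y (varIdx (descend s x k))) :
    descend s x n = descend s y n := by
  induction n with
  | zero => rfl
  | succ n ih =>
    have he := ih (fun k hk => h k (by omega))
    rw [descend, descend, ← he, h n (by omega)]

lemma descend_prefix (s : List Bool) (x : ℕ → Bool) {k m : ℕ} (h : k ≤ m) :
    descend s x k <+: descend s x m := by
  induction m with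
  | zero => have : k = 0 := by omega
            subst this; exact List.prefix_refl _
  | succ m ih =>
    rcases Nat.lt_or_ge k (m + 1) with hlt | hge
    · exact (ih (by omega)).trans (by rw [descend]; exact List.prefix_append _ _)
    · have : k = m + 1 := by omega
      subst this; exact List.prefix_refl _

end Aux2
section Aux3

lemma cp_override_low (s : List Bool) (v x : ℕ → Bool) {k : ℕ} (hk : k ≤ s.length) :
    chosenPrefix (fun j => if j < varIdx s then v j else x j) k = chosenPrefix v k := by
  apply chosenPrefix_congr
  intro k' hk'
  have hlt : varIdx (chosenPrefix (fun j => if j < varIdx s then v j else x j) k') < varIdx s := by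
    apply varIdx_lt_of_length_lt
    rw [chosenPrefix_length]; omega
  simp [hlt]

lemma restrict_root_eval (i t : ℕ) (v x : ℕ → Bool) :
    restrictF (fun x => x (varIdx (chosenPrefix x i))) t v x
      = (fun j => if j < t then v j else x j)
          (varIdx (chosenPrefix (fun j => if j < t then v j else x j) i)) := rfl

lemma not_varIdx_descend_lt (s : List Bool) (x : ℕ → Bool) (m : ℕ) :
    ¬ varIdx (descend s x m) < varIdx s := by
  cases m with
  | zero => exact lt_irrefl _
  | succ m =>
    have : varIdx s < varIdx (descend s x (m + 1)) := by
      apply varIdx_lt_of_length_lt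
      rw [descend_length]; omega
    omega

lemma eval_low {s : List Bool} {i : ℕ} (hi : i < s.length) (v x1 x2 : ℕ → Bool) :
    restrictF (fun x => x (varIdx (chosenPrefix x i))) (varIdx s) v x1
      = restrictF (fun x => x (varIdx (chosenPrefix x i))) (varIdx s) v x2 := by
  rw [restrict_root_eval, restrict_root_eval,
    cp_override_low s v x1 (le_of_lt hi), cp_override_low s v x2 (le_of_lt hi)]
  have hlt : varIdx (chosenPrefix v i) < varIdx s := by
    apply varIdx_lt_of_length_lt; rw [chosenPrefix_length]; exact hi
  simp [hlt]

lemma eval_indep {s : List Bool} {v : ℕ → Bool} {i : ℕ}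
    (hcp : chosenPrefix v s.length ≠ s) (x1 x0 : ℕ → Bool)
    (hx : ∀ j, j ≠ varIdx s → x1 j = x0 j) :
    restrictF (fun x => x (varIdx (chosenPrefix x i))) (varIdx s) v x1
      = restrictF (fun x => x (varIdx (chosenPrefix x i))) (varIdx s) v x0 := by
  set z1 : ℕ → Bool := fun j => if j < varIdx s then v j else x1 j with hz1
  set z0 : ℕ → Bool := fun j => if j < varIdx s then v j else x0 j with hz0
  have hz : ∀ j, j ≠ varIdx s → z1 j = z0 j := by
    intro j hj
    by_cases hlt : j < varIdx s
    · simp [hz1, hz0, hlt]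
    · simp [hz1, hz0, hlt, hx j hj]
  have hne : ∀ k, k ≤ s.length → k ≤ i → chosenPrefix z1 k ≠ s ∨ True := fun _ _ _ => Or.inr trivial
  have hns : ∀ k, chosenPrefix z1 k ≠ s := by
    intro k
    by_cases hk : k = s.length
    · subst hk
      rw [hz1, cp_override_low s v x1 (le_refl _)]
      exact hcp
    · intro hc
      apply hk
      rw [← chosenPrefix_length z1 k, hc]
  have hvne : ∀ k, varIdx (chosenPrefix z1 k) ≠ varIdx s := by
    intro k hc
    exact hns k (varIdx_injective hc)
  have hcpeq : chosenPrefix z1 i = chosenPrefix z0 i := by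
    apply chosenPrefix_congr
    intro k hk
    exact hz _ (hvne k)
  rw [restrict_root_eval, restrict_root_eval, ← hz1, ← hz0, ← hcpeq]
  exact hz _ (hvne i)

lemma eval_mid {s : List Bool} {v : ℕ → Bool} {i : ℕ} (hd : s.length ≤ i)
    (hcp : chosenPrefix v s.length = s) (x : ℕ → Bool) :
    restrictF (fun x => x (varIdx (chosenPrefix x i))) (varIdx s) v x
      = x (varIdx (descend s x (i - s.length))) := by
  set z : ℕ → Bool := fun j => if j < varIdx s then v j else x j with hzdef
  have hstep : ∀ m, m ≤ i - s.length → chosenPrefix z (s.length + m) = descend s x m := by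
    intro m
    induction m with
    | zero =>
      intro _
      rw [Nat.add_zero]
      exact (cp_override_low s v x (le_refl _)).trans hcp
    | succ m ih =>
      intro hm
      have hih := ih (by omega)
      have hnl : ¬ varIdx (descend s x m) < varIdx s := not_varIdx_descend_lt s x m
      rw [show s.length + (m + 1) = (s.length + m) + 1 by omega, chosenPrefix, hih,
        descend]
      congr 1
      rw [hzdef]
      simp [hnl]
  have h1 : chosenPrefix z i = descend s x (i - s.length) := by
    have := hstep (i - s.length) (le_refl _)
    rwa [show s.length + (i - s.length) = i by omega] at this
  rw [restrict_root_eval, ← hzdef, h1, hzdef]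
  simp [not_varIdx_descend_lt s x (i - s.length)]

end Aux3
section Aux4

open Classical in
noncomputable def vFor (s : List Bool) : ℕ → Bool := fun j =>
  if (∃ k, k < s.length ∧ varIdx (s.take k) = j ∧ s.getD k false = true) then true else false

lemma vFor_take {s : List Bool} {k : ℕ} (hk : k < s.length) :
    vFor s (varIdx (s.take k)) = s.getD k false := by
  unfold vFor
  by_cases h : ∃ k', k' < s.length ∧ varIdx (s.take k') = varIdx (s.take k) ∧ s.getD k' false = true
  · obtain ⟨k', hk', heq, hval⟩ := h
    have hts : s.take k' = s.take k := varIdx_injective heq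
    have hkk : k' = k := by
      have h1 := congrArg List.length hts
      simp [List.length_take] at h1
      omega
    subst hkk
    rw [if_pos ⟨k', hk', rfl, hval⟩, hval]
  · rw [if_neg h]
    cases hval : s.getD k false with
    | false => rfl
    | true => exact absurd ⟨k, hk, rfl, hval⟩ h

lemma cp_vFor (s : List Bool) : ∀ k, k ≤ s.length → chosenPrefix (vFor s) k = s.take k := by
  intro k
  induction k with
  | zero => intro _; rfl
  | succ k ih =>
    intro hk
    rw [chosenPrefix, ih (by omega), vFor_take (by omega : k < s.length),
      List.getD_eq_getElem s false (by omega : k < s.length)]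
    exact List.take_concat_get' s k (by omega)

def gF (s : List Bool) (i : ℕ) : (ℕ → Bool) → Bool :=
  fun x => x (varIdx (descend s x (i - s.length)))

lemma descend_ind (s : List Bool) (m : ℕ) :
    ∀ k, k ≤ m →
      descend s (fun j => decide (j = varIdx (s ++ List.replicate m false))) k
        = s ++ List.replicate k false := by
  intro k
  induction k with
  | zero => intro _; simp [descend]
  | succ k ih =>
    intro hk
    rw [descend, ih (by omega)]
    have hne : varIdx (s ++ List.replicate k false) ≠ varIdx (s ++ List.replicate m false) := by
      intro hc
      have := congrArg List.length (varIdx_injective hc)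
      simp [List.length_append, List.length_replicate] at this
      omega
    have hb : (decide (varIdx (s ++ List.replicate k false)
        = varIdx (s ++ List.replicate m false))) = false := by simp [hne]
    rw [hb, List.append_assoc, List.replicate_succ']

lemma gF_ind_self (s : List Bool) {i : ℕ} (hd : s.length ≤ i) :
    gF s i (fun j => decide (j = varIdx (s ++ List.replicate (i - s.length) false))) = true := by
  unfold gF
  rw [descend_ind s (i - s.length) (i - s.length) (le_refl _)]
  simp

lemma gF_ind_other (s : List Bool) {i i' : ℕ} (hd : s.length ≤ i) (hii : i < i') :
    gF s i' (fun j => decide (j = varIdx (s ++ List.replicate (i - s.length) false))) = false := by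
  unfold gF
  set x : ℕ → Bool := fun j => decide (j = varIdx (s ++ List.replicate (i - s.length) false)) with hx
  have hne : varIdx (descend s x (i' - s.length)) ≠ varIdx (s ++ List.replicate (i - s.length) false) := by
    intro hc
    have := congrArg List.length (varIdx_injective hc)
    rw [descend_length] at this
    simp [List.length_append, List.length_replicate] at this
    omega
  exact decide_eq_false hne

lemma gF_injOn (s : List Bool) {i i' : ℕ} (hd : s.length ≤ i) (hd' : s.length ≤ i')
    (h : gF s i = gF s i') : i = i' := by
  by_contra hne
  rcases Nat.lt_or_ge i i' with hlt | hge
  · have h1 := gF_ind_self s hd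
    have h2 := gF_ind_other s hd hlt
    rw [h] at h1
    rw [h1] at h2
    exact Bool.false_ne_true h2.symm
  · have hlt : i' < i := by omega
    have h1 := gF_ind_self s hd'
    have h2 := gF_ind_other s hd' hlt
    rw [← h] at h1
    rw [h1] at h2
    exact Bool.false_ne_true h2.symm

end Aux4
section Aux5

lemma dependsOn_gF (s : List Bool) {i : ℕ} (hd : s.length ≤ i) :
    dependsOn (gF s i) (varIdx s) := by
  rcases Nat.eq_or_lt_of_le hd with heq | hlt
  · refine ⟨fun _ => false, ?_⟩
    have h0 : i - s.length = 0 := by omega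
    have hgf : ∀ y, gF s i y = y (varIdx s) := fun y => by unfold gF; rw [h0]; rfl
    rw [hgf, hgf, Function.update_self, Function.update_self]
    simp
  · set m := i - s.length with hm
    have hm1 : 1 ≤ m := by omega
    set T := s ++ List.replicate m false with hT
    set x : ℕ → Bool := fun j => decide (j = varIdx T) with hxdef
    refine ⟨x, ?_⟩
    have hxt : x (varIdx s) = false := by
      rw [hxdef]
      simp only [decide_eq_false_iff_not]
      intro hc
      have := congrArg List.length (varIdx_injective hc)
      simp [hT] at this
      omega
    have hupdF : Function.update x (varIdx s) false = x := by
      funext j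
      by_cases hj : j = varIdx s
      · subst hj; simp [Function.update_self, hxt]
      · simp [Function.update_of_ne hj]
    have hgT : gF s i x = true := by
      have := gF_ind_self s hd
      rw [hxdef, hT, hm]
      exact this
    set x1 := Function.update x (varIdx s) true with hx1
    have hd1 : descend s x1 1 = s ++ [true] := by
      simp [descend, hx1, Function.update_self]
    have hpre : descend s x1 1 <+: descend s x1 m := descend_prefix s x1 hm1
    have hPne : descend s x1 m ≠ T := by
      intro hc
      rw [hc, hd1] at hpre
      obtain ⟨u, hu⟩ := hpre
      rw [List.append_assoc] at hu
      rw [hT] at hu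
      have h2 : [true] ++ u = List.replicate m false := List.append_cancel_left hu
      have h4 : List.replicate m false = false :: List.replicate (m - 1) false := by
        rw [← List.replicate_succ]
        congr 1
        omega
      rw [h4] at h2
      simp at h2
    have hPnes : descend s x1 m ≠ s := by
      intro hc
      have := congrArg List.length hc
      rw [descend_length] at this
      omega
    have hval : gF s i x1 = false := by
      have hne1 : varIdx (descend s x1 m) ≠ varIdx T := fun hc => hPne (varIdx_injective hc)
      have hne2 : varIdx (descend s x1 m) ≠ varIdx s := fun hc => hPnes (varIdx_injective hc)
      show x1 (varIdx (descend s x1 (i - s.length))) = false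
      rw [← hm]
      have h3 : x1 (varIdx (descend s x1 m)) = x (varIdx (descend s x1 m)) := by
        rw [hx1, Function.update_of_ne hne2]
      rw [h3, hxdef]
      simp [hne1]
    rw [hupdF, hval, hgT]
    exact Bool.false_ne_true

lemma not_dependsOn_of_const {g : (ℕ → Bool) → Bool} {t : ℕ}
    (h : ∀ x1 x2, g x1 = g x2) : ¬ dependsOn g t := by
  rintro ⟨x, hx⟩
  exact hx (h _ _)

lemma setEq (b : ℕ) (s : List Bool) (hsb : s.length < b) :
    {g | (∃ f ∈ {f | ∃ i < b, f = fun x => x (varIdx (chosenPrefix x i))},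
            ∃ v, g = restrictF f (varIdx s) v) ∧ dependsOn g (varIdx s)}
      = gF s '' Set.Ico s.length b := by
  ext g
  simp only [Set.mem_setOf_eq, Set.mem_image, Set.mem_Ico]
  constructor
  · rintro ⟨⟨f, ⟨i, hib, rfl⟩, v, rfl⟩, hdep⟩
    by_cases hdi : s.length ≤ i
    · by_cases hcp : chosenPrefix v s.length = s
      · have hre : restrictF (fun x => x (varIdx (chosenPrefix x i))) (varIdx s) v = gF s i :=
          funext fun x => eval_mid hdi hcp x
        exact ⟨i, ⟨hdi, hib⟩, hre.symm⟩
      · exfalso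
        obtain ⟨x, hx⟩ := hdep
        exact hx (eval_indep hcp _ _ (fun j hj => by
          rw [Function.update_of_ne hj, Function.update_of_ne hj]))
    · exact absurd hdep (not_dependsOn_of_const (eval_low (by omega) v))
  · rintro ⟨i, ⟨hdi, hib⟩, rfl⟩
    have hcp : chosenPrefix (vFor s) s.length = s := by
      rw [cp_vFor s s.length (le_refl _), List.take_length]
    refine ⟨⟨_, ⟨i, hib, rfl⟩, vFor s, ?_⟩, dependsOn_gF s hdi⟩
    exact (funext fun x => eval_mid hdi hcp x).symm

end Aux5
section Aux6

lemma ncardEq (b : ℕ) (s : List Bool) (hsb : s.length < b) :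
    Set.ncard {g | (∃ f ∈ {f | ∃ i < b, f = fun x => x (varIdx (chosenPrefix x i))},
        ∃ v, g = restrictF f (varIdx s) v) ∧ dependsOn g (varIdx s)} = b - s.length := by
  rw [setEq b s hsb,
    Set.ncard_image_of_injOn
      (fun i hi i' hi' h => gF_injOn s (Set.mem_Ico.mp hi).1 (Set.mem_Ico.mp hi').1 h),
    ← Finset.coe_Ico, Set.ncard_coe_finset, Nat.card_Ico]

lemma sumAux (b : ℕ) :
    ∑ t ∈ Finset.range (2 ^ b - 1), (b - Nat.log 2 (t + 1)) = 2 ^ (b + 1) - b - 2 := by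
  induction b with
  | zero => simp
  | succ b ih =>
    have hp1 : (1:ℕ) ≤ 2 ^ b := Nat.one_le_pow _ _ (by norm_num)
    have hp2 : (2:ℕ) ^ (b + 1) = 2 * 2 ^ b := by rw [pow_succ]; ring
    have hp3 : (2:ℕ) ^ (b + 1 + 1) = 4 * 2 ^ b := by rw [pow_succ, pow_succ]; ring
    have hp4 : b < 2 ^ b := Nat.lt_two_pow_self
    have hA : 2 ^ b - 1 ≤ 2 ^ (b + 1) - 1 := by omega
    rw [Finset.range_eq_Ico,
      ← Finset.sum_Ico_consecutive _ (Nat.zero_le (2 ^ b - 1)) hA]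
    have hfirst : ∑ t ∈ Finset.Ico 0 (2 ^ b - 1), (b + 1 - Nat.log 2 (t + 1))
        = (∑ t ∈ Finset.Ico 0 (2 ^ b - 1), (b - Nat.log 2 (t + 1))) + (2 ^ b - 1) := by
      rw [show ∑ t ∈ Finset.Ico 0 (2 ^ b - 1), (b + 1 - Nat.log 2 (t + 1))
          = ∑ t ∈ Finset.Ico 0 (2 ^ b - 1), ((b - Nat.log 2 (t + 1)) + 1) from
        Finset.sum_congr rfl (by
          intro t ht
          rw [Finset.mem_Ico] at ht
          have hlog : Nat.log 2 (t + 1) < b :=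
            Nat.log_lt_of_lt_pow (by omega) (by omega)
          omega)]
      rw [Finset.sum_add_distrib, Finset.sum_const, Nat.card_Ico]
      simp [mul_comm]
    have hsecond : ∑ t ∈ Finset.Ico (2 ^ b - 1) (2 ^ (b + 1) - 1), (b + 1 - Nat.log 2 (t + 1))
        = 2 ^ b := by
      rw [show ∑ t ∈ Finset.Ico (2 ^ b - 1) (2 ^ (b + 1) - 1), (b + 1 - Nat.log 2 (t + 1))
          = ∑ _t ∈ Finset.Ico (2 ^ b - 1) (2 ^ (b + 1) - 1), 1 from
        Finset.sum_congr rfl (by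
          intro t ht
          rw [Finset.mem_Ico] at ht
          have hlog : Nat.log 2 (t + 1) = b :=
            Nat.log_eq_of_pow_le_of_lt_pow (by omega) (by omega)
          omega)]
      rw [Finset.sum_const, Nat.card_Ico, smul_eq_mul, mul_one]
      omega
    rw [hfirst, hsecond, ← Finset.range_eq_Ico, ih]
    omega

end Aux6
theorem bitwise_int_bdd_size (b : ℕ) (hb : 1 ≤ b) :
    bddNodeCount {f | ∃ i < b, f = fun x => x (varIdx (chosenPrefix x i))}
        (2 ^ b - 1) =
      2 ^ (b + 1) - b - 2 := by
  unfold bddNodeCount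
  have hsum : ∀ t ∈ Finset.range (2 ^ b - 1),
      Set.ncard {g | (∃ f ∈ {f | ∃ i < b, f = fun x => x (varIdx (chosenPrefix x i))},
          ∃ v, g = restrictF f t v) ∧ dependsOn g t} = b - Nat.log 2 (t + 1) := by
    intro t ht
    rw [Finset.mem_range] at ht
    set d := Nat.log 2 (t + 1) with hd
    have h1 : 2 ^ d ≤ t + 1 := Nat.pow_log_le_self 2 (by omega)
    have h2 : t + 1 < 2 ^ (d + 1) := Nat.lt_pow_succ_log_self (by norm_num) _
    have hb2 : 1 ≤ 2 ^ b := Nat.one_le_pow _ _ (by norm_num)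
    have htb : t + 1 < 2 ^ b := by omega
    have hdb : d < b := Nat.log_lt_of_lt_pow (by omega) htb
    have hr : t + 1 - 2 ^ d < 2 ^ d := by
      rw [pow_succ] at h2; omega
    set s : List Bool := strOf d (t + 1 - 2 ^ d) with hs
    have hlen : s.length = d := length_strOf _ _
    have hvar : varIdx s = t := by
      rw [varIdx_def, hlen, hs, valB_strOf hr]
      have h3 : 1 ≤ 2 ^ d := Nat.one_le_pow _ _ (by norm_num)
      omega
    have hkey := ncardEq b s (by rw [hlen]; exact hdb)
    rw [hvar] at hkey
    rw [hkey, hlen]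
  exact (Finset.sum_congr rfl hsum).trans (sumAux b)
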